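/- For every ω ∈ Ω, the sequence of partial sums Σ_{j=0}^{N} ω(j)·S(j)·ρ, regarded modulo 1 as elements of the circle ℝ/ℤ, converges as N → ∞; moreover, writing Π_ρ(ω) ∈ ℝ/ℤ for the limit, the map Π_ρ : Ω → ℝ/ℤ is continuous. -/

import Mathlib

open Filter Finset

noncomputable def auxBlk (r : ℕ → ℕ) (hex : ∀ i, ∃ n, i < r (n + 2)) (i : ℕ) : ℕ :=
  Nat.find (hex i) + 1

noncomputable def auxM (r p : ℕ → ℕ) (hex : ∀ i, ∃ n, i < r (n + 2)) (i : ℕ) : ℤ :=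
  if r 1 ≤ i then ((i - r (auxBlk r hex i) + 1 : ℕ) : ℤ) * p (auxBlk r hex i) else 0

noncomputable def auxT (S : ℕ → ℕ) (mI : ℕ → ℤ) (ρ : ℝ) (ω : ℕ → Bool) (i : ℕ) : ℝ :=
  ((ω i).toNat : ℝ) * ((S i : ℝ) * ρ - (mI i : ℝ))

noncomputable def auxG (S : ℕ → ℕ) (mI : ℕ → ℤ) (ρ : ℝ) (ω : ℕ → Bool) (N : ℕ) : ℝ :=
  ∑ i ∈ Finset.range (N + 1), auxT S mI ρ ω i


lemma conv_bound (a q p : ℕ → ℕ) (ha : ∀ k, 1 ≤ k → 1 ≤ a k)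
    (hq0 : q 0 = 1) (hq1 : q 1 = a 1)
    (hq : ∀ k, 1 ≤ k → q (k + 1) = a (k + 1) * q k + q (k - 1))
    (hp0 : p 0 = 0) (hp1 : p 1 = 1)
    (hp : ∀ k, 1 ≤ k → p (k + 1) = a (k + 1) * p k + p (k - 1))
    (ρ : ℝ)
    (hρlim : Filter.Tendsto (fun k => (p k : ℝ) / (q k : ℝ)) Filter.atTop (nhds ρ))
    (hqpos : ∀ k, 0 < q k) (hq2 : ∀ k, q k + q (k+1) ≤ q (k+2)) :
    ∀ k, |(q k : ℝ) * ρ - p k| ≤ 1 / (q (k+1)) := by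
  have hqR : ∀ k, (0:ℝ) < q k := fun k => by exact_mod_cast hqpos k
  have hD : ∀ k, (p (k+1) : ℤ) * q k - (p k : ℤ) * q (k+1) = (-1)^k := by
    intro k
    induction k with
    | zero => simp [hp0, hp1, hq0, hq1]
    | succ n ih =>
      have hpk := hp (n+1) (by omega)
      have hqk := hq (n+1) (by omega)
      simp only [Nat.add_sub_cancel] at hpk hqk
      rw [hpk, hqk]
      push_cast
      push_cast at ih
      ring_nf
      ring_nf at ih
      linarith [ih]
  have hxdiff : ∀ k, (p (k+1):ℝ)/q (k+1) - (p k:ℝ) / q k = (-1)^k / (q k * q (k+1)) := by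
    intro k
    have hD' : (p (k+1) : ℝ) * q k - (p k : ℝ) * q (k+1) = (-1)^k := by
      exact_mod_cast hD k
    rw [div_sub_div _ _ (hqR (k+1)).ne' (hqR k).ne']
    have hnum : (p (k+1):ℝ) * q k - (q (k+1):ℝ) * p k = (-1)^k := by linarith [hD']
    rw [hnum, mul_comm ((q (k+1):ℝ)) ((q k:ℝ))]
  have htmono : ∀ k, (1:ℝ) / (q (k+1) * q (k+2)) ≤ 1 / (q k * q (k+1)) := by
    intro k
    apply one_div_le_one_div_of_le
    · exact mul_pos (hqR k) (hqR (k+1))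
    · have h1 : (q k : ℝ) ≤ q (k+2) := by
        have := hq2 k; have := hqpos (k+1); exact_mod_cast by omega
      calc (q k:ℝ) * q (k+1) = q (k+1) * q k := by ring
        _ ≤ q (k+1) * q (k+2) := mul_le_mul_of_nonneg_left h1 (hqR (k+1)).le
  -- alternating partial differences
  have halt : ∀ m k, 0 ≤ (-1:ℝ)^k * ((p (k+m):ℝ)/q (k+m) - (p k:ℝ)/q k) ∧
      (-1:ℝ)^k * ((p (k+m):ℝ)/q (k+m) - (p k:ℝ)/q k) ≤ 1 / (q k * q (k+1)) := by
    intro m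
    induction m with
    | zero =>
      intro k
      constructor
      · simp
      · simp; positivity
    | succ n ih =>
      intro k
      have h1 := ih (k+1)
      have h2 := hxdiff k
      have hkey : (-1:ℝ)^k * ((p (k+(n+1)):ℝ)/q (k+(n+1)) - (p k:ℝ)/q k)
          = 1 / (q k * q (k+1)) - (-1:ℝ)^(k+1) * ((p ((k+1)+n):ℝ)/q ((k+1)+n) - (p (k+1):ℝ)/q (k+1)) := by
      
        have hidx : k + (n+1) = (k+1) + n := by omega
        rw [hidx]
        have : (-1:ℝ)^(k+1) = -(-1:ℝ)^k := by ring
        rw [this]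
        have hsq : (-1:ℝ)^k * (-1:ℝ)^k = 1 := by
          rw [← pow_add, show k + k = 2 * k by ring, pow_mul]; norm_num
        linear_combination ((-1:ℝ)^k) * h2 + (1 / ((q k:ℝ) * (q (k+1):ℝ))) * hsq
      constructor
      · rw [hkey]
        have := htmono k
        linarith [h1.2]
      · rw [hkey]
        linarith [h1.1]
  -- limit bound
  intro k
  have hlim2 : Tendsto (fun m => (p (k+m):ℝ)/q (k+m)) atTop (nhds ρ) := by
    have hmono : Tendsto (fun m => k + m) atTop atTop :=
      tendsto_atTop_mono (fun m => Nat.le_add_left m k) tendsto_id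
    exact hρlim.comp hmono
  have habs : ∀ m, |(p (k+m):ℝ)/q (k+m) - (p k:ℝ)/q k| ≤ 1 / (q k * q (k+1)) := by
    intro m
    rcases halt m k with ⟨h1, h2⟩
    rcases Nat.even_or_odd k with he | ho
    · rw [he.neg_one_pow] at h1 h2
      rw [abs_le]; constructor <;> nlinarith [one_div_pos.mpr (mul_pos (hqR k) (hqR (k+1)))]
    · rw [ho.neg_one_pow] at h1 h2
      rw [abs_le]; constructor <;> nlinarith [one_div_pos.mpr (mul_pos (hqR k) (hqR (k+1)))]
  have hρclose : |ρ - (p k:ℝ)/q k| ≤ 1 / (q k * q (k+1)) := by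
    have : Tendsto (fun m => |(p (k+m):ℝ)/q (k+m) - (p k:ℝ)/q k|) atTop
        (nhds (|ρ - (p k:ℝ)/q k|)) := by
      exact ((hlim2.sub tendsto_const_nhds).abs)
    exact le_of_tendsto this (Filter.Eventually.of_forall habs)
  have : |(q k:ℝ) * ρ - p k| = (q k : ℝ) * |ρ - (p k:ℝ)/q k| := by
    rw [← abs_of_pos (hqR k), ← abs_mul]
    congr 1
    field_simp [(hqR k).ne']
    rw [abs_of_pos (hqR k)]
    ring
  rw [this]
  calc (q k:ℝ) * |ρ - (p k:ℝ)/q k| ≤ (q k:ℝ) * (1 / (q k * q (k+1))) :=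
        mul_le_mul_of_nonneg_left hρclose (hqR k).le
    _ = 1 / q (k+1) := by
        rw [mul_one_div, div_eq_div_iff (mul_pos (hqR k) (hqR (k+1))).ne' (hqR (k+1)).ne']
        ring

theorem stmt_6 (a : ℕ → ℕ) (ha : ∀ k, 1 ≤ k → 1 ≤ a k)
    (q : ℕ → ℕ) (hq0 : q 0 = 1) (hq1 : q 1 = a 1)
    (hq : ∀ k, 1 ≤ k → q (k + 1) = a (k + 1) * q k + q (k - 1))
    (p : ℕ → ℕ) (hp0 : p 0 = 0) (hp1 : p 1 = 1)
    (hp : ∀ k, 1 ≤ k → p (k + 1) = a (k + 1) * p k + p (k - 1))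
    (ρ : ℝ) (hρirr : Irrational ρ) (hρmem : ρ ∈ Set.Ioo (0 : ℝ) 1)
    (hρlim : Filter.Tendsto (fun k => (p k : ℝ) / (q k : ℝ)) Filter.atTop (nhds ρ))
    (r : ℕ → ℕ) (hr1 : r 1 = q 1 - 1)
    (hr : ∀ k, 1 ≤ k → r (k + 1) = r k + a (k + 1))
    (S : ℕ → ℕ) (hSlow : ∀ j, j ≤ r 1 → S j = j + 1)
    (hShigh : ∀ k, 1 ≤ k → ∀ j, j < a (k + 1) → S (r k + j) = (j + 1) * q k) :
    ∃ Pi : {ω : ℕ → Bool //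
        ∀ j, ∑ i ∈ Finset.range (j + 1), (ω i).toNat * S i < S (j + 1)} → AddCircle (1 : ℝ),
      Continuous Pi ∧
      ∀ ω, Filter.Tendsto
        (fun N => ((↑(∑ j ∈ Finset.range (N + 1),
            ((ω.val j).toNat : ℝ) * (S j : ℝ) * ρ)) : AddCircle (1 : ℝ)))
        Filter.atTop (nhds (Pi ω)) := by
  classical
  -- ## basic positivity and growth of q
  have hqpos : ∀ k, 0 < q k := by
    have h2 : ∀ k, 0 < q k ∧ 0 < q (k + 1) := by
      intro k
      induction k with
      | zero =>
        refine ⟨by omega, ?_⟩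
        rw [hq1]; exact ha 1 le_rfl
      | succ n ih =>
        refine ⟨ih.2, ?_⟩
        have hqk : q (n + 2) = a (n + 2) * q (n + 1) + q n := by
          have h := hq (n + 1) (by omega)
          simp only [Nat.add_sub_cancel] at h
          exact h
        have h3 : 1 * q (n + 1) ≤ a (n + 2) * q (n + 1) :=
          Nat.mul_le_mul_right (q (n + 1)) (ha (n + 2) (by omega))
        show 0 < q (n + 2)
        omega
    exact fun k => (h2 k).1
  have hq2 : ∀ k, q k + q (k + 1) ≤ q (k + 2) := by
    intro k
    have hqk : q (k + 2) = a (k + 2) * q (k + 1) + q k := by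
      have h := hq (k + 1) (by omega)
      simp only [Nat.add_sub_cancel] at h
      exact h
    have h3 : 1 * q (k + 1) ≤ a (k + 2) * q (k + 1) :=
      Nat.mul_le_mul_right (q (k + 1)) (ha (k + 2) (by omega))
    omega
  have hqR : ∀ k, (0 : ℝ) < q k := fun k => by exact_mod_cast hqpos k
  have hB : ∀ k, |(q k : ℝ) * ρ - p k| ≤ 1 / (q (k + 1)) :=
    conv_bound a q p ha hq0 hq1 hq hp0 hp1 hp ρ hρlim hqpos hq2
  -- ## facts about r
  have hrge : ∀ n, n ≤ r (n + 1) := by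
    intro n
    induction n with
    | zero => omega
    | succ n ih =>
      have h1 : r (n + 1 + 1) = r (n + 1) + a (n + 1 + 1) := hr (n + 1) (by omega)
      have h2 : 1 ≤ a (n + 1 + 1) := ha (n + 1 + 1) (by omega)
      omega
  have hrstep : ∀ k, 1 ≤ k → r k ≤ r (k + 1) := by
    intro k hk
    have h1 : r (k + 1) = r k + a (k + 1) := hr k hk
    omega
  have hrmono : ∀ k l, 1 ≤ k → k ≤ l → r k ≤ r l := by
    intro k l hk
    induction l with
    | zero => intro h; omega
    | succ n ih =>
      intro hkl
      rcases Nat.lt_or_ge k (n + 1) with h | h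
      · exact le_trans (ih (by omega)) (hrstep n (by omega))
      · have hkn : k = n + 1 := by omega
        rw [hkn]
  -- ## the block index
  have hex : ∀ i : ℕ, ∃ n, i < r (n + 2) := fun i =>
    ⟨i, lt_of_lt_of_le (Nat.lt_succ_self i) (hrge (i + 1))⟩
  have hblk1 : ∀ i, 1 ≤ auxBlk r hex i := fun i => Nat.le_add_left 1 _
  have hblkub : ∀ i, i < r (auxBlk r hex i + 1) := fun i => Nat.find_spec (hex i)
  have hblklb : ∀ i, r 1 ≤ i → r (auxBlk r hex i) ≤ i := by
    intro i hi
    rcases Nat.eq_zero_or_pos (Nat.find (hex i)) with h0 | hpos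
    · have hb : auxBlk r hex i = 1 := by unfold auxBlk; omega
      rw [hb]; exact hi
    · have hmin := Nat.find_min (hex i) (Nat.sub_lt hpos one_pos)
      have he : Nat.find (hex i) - 1 + 2 = auxBlk r hex i := by unfold auxBlk; omega
      rw [he] at hmin
      omega
  have hblkeq : ∀ k, 1 ≤ k → ∀ i, r k ≤ i → i < r (k + 1) → auxBlk r hex i = k := by
    intro k hk i hlo hhi
    have h1 : r 1 ≤ i := le_trans (hrmono 1 k le_rfl hk) hlo
    have hub := hblkub i
    have hlb := hblklb i h1
    have hbk := hblk1 i
    by_contra hne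
    rcases Nat.lt_or_ge (auxBlk r hex i) k with h | h
    · have h2 := hrmono (auxBlk r hex i + 1) k (by omega) (by omega)
      omega
    · have h2 := hrmono (k + 1) (auxBlk r hex i) (by omega) (by omega)
      omega
  -- ## S and m on blocks
  have hrq : ∀ k, 1 ≤ k → S (r (k + 1)) = q (k + 1) := by
    intro k hk
    have := hShigh (k + 1) (by omega) 0 (ha (k + 2) (by omega))
    simpa using this
  have hrpos : ∀ k, 1 ≤ k → 1 ≤ r (k + 1) := by
    intro k hk
    have h1 := hrge k
    have h2 : r (k + 1) = r k + a (k + 1) := hr k hk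
    have h3 := ha (k + 1) (by omega)
    omega
  have hSm : ∀ k, 1 ≤ k → ∀ i, r k ≤ i → i < r (k + 1) →
      S i = (i - r k + 1) * q k ∧ auxM r p hex i = ((i - r k + 1 : ℕ) : ℤ) * p k := by
    intro k hk i hlo hhi
    have hj : i - r k < a (k + 1) := by
      have := hr k hk; omega
    have hS := hShigh k hk (i - r k) hj
    have hik : r k + (i - r k) = i := by omega
    rw [hik] at hS
    have h1 : r 1 ≤ i := le_trans (hrmono 1 k le_rfl hk) hlo
    have hbe := hblkeq k hk i hlo hhi
    constructor
    · omega
    · unfold auxM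
      rw [if_pos h1, hbe]
  -- term bound on blocks
  have hterm : ∀ ω : ℕ → Bool, ∀ k, 1 ≤ k → ∀ i, r k ≤ i → i < r (k + 1) →
      |auxT S (auxM r p hex) ρ ω i| ≤
        (((ω i).toNat * S i : ℕ) : ℝ) * (1 / ((q k : ℝ) * q (k + 1))) := by
    intro ω k hk i hlo hhi
    obtain ⟨hS, hm⟩ := hSm k hk i hlo hhi
    have hSr : (S i : ℝ) = ((i - r k + 1 : ℕ) : ℝ) * q k := by exact_mod_cast hS
    have hmr : ((auxM r p hex i : ℤ) : ℝ) = ((i - r k + 1 : ℕ) : ℝ) * p k := by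
      rw [hm]; push_cast; ring
    have habs : |(S i : ℝ) * ρ - (auxM r p hex i : ℝ)|
        ≤ (S i : ℝ) * (1 / ((q k : ℝ) * q (k + 1))) := by
      rw [hSr, hmr]
      have h1 : ((i - r k + 1 : ℕ) : ℝ) * ↑(q k) * ρ - ((i - r k + 1 : ℕ) : ℝ) * ↑(p k)
          = ((i - r k + 1 : ℕ) : ℝ) * ((q k : ℝ) * ρ - p k) := by ring
      rw [h1, abs_mul, abs_of_nonneg (by positivity : (0:ℝ) ≤ ((i - r k + 1 : ℕ) : ℝ))]
      calc ((i - r k + 1 : ℕ) : ℝ) * |(q k : ℝ) * ρ - p k|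
          ≤ ((i - r k + 1 : ℕ) : ℝ) * (1 / q (k + 1)) :=
            mul_le_mul_of_nonneg_left (hB k) (by positivity)
        _ = ((i - r k + 1 : ℕ) : ℝ) * ↑(q k) * (1 / ((q k : ℝ) * q (k + 1))) := by
            rw [mul_assoc, mul_one_div, mul_one_div, ← mul_div_assoc,
              div_eq_div_iff (hqR (k+1)).ne' (mul_pos (hqR k) (hqR (k+1))).ne']
            ring
    unfold auxT
    rw [abs_mul, abs_of_nonneg (by positivity : (0:ℝ) ≤ ((ω i).toNat : ℝ))]
    calc ((ω i).toNat : ℝ) * |(S i : ℝ) * ρ - (auxM r p hex i : ℝ)|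
        ≤ ((ω i).toNat : ℝ) * ((S i : ℝ) * (1 / ((q k : ℝ) * q (k + 1)))) :=
          mul_le_mul_of_nonneg_left habs (by positivity)
      _ = (((ω i).toNat * S i : ℕ) : ℝ) * (1 / ((q k : ℝ) * q (k + 1))) := by
          push_cast; ring
  -- block bound
  have hblock : ∀ ω : ℕ → Bool,
      (∀ j, ∑ i ∈ Finset.range (j + 1), (ω i).toNat * S i < S (j + 1)) →
      ∀ k, 1 ≤ k →
        ∑ i ∈ Finset.Ico (r k) (r (k + 1)), |auxT S (auxM r p hex) ρ ω i| ≤ 1 / (q k : ℝ) := by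
    intro ω hω k hk
    have hnat : (∑ i ∈ Finset.Ico (r k) (r (k + 1)), (ω i).toNat * S i) ≤ q (k + 1) := by
      have hsub : Finset.Ico (r k) (r (k + 1)) ⊆ Finset.range (r (k + 1)) := by
        intro x hx
        simp only [Finset.mem_Ico] at hx
        exact Finset.mem_range.mpr hx.2
      have h1 : (∑ i ∈ Finset.Ico (r k) (r (k + 1)), (ω i).toNat * S i)
          ≤ ∑ i ∈ Finset.range (r (k + 1)), (ω i).toNat * S i :=
        Finset.sum_le_sum_of_subset hsub
      have hr1p := hrpos k hk
      have h2 := hω (r (k + 1) - 1)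
      have heq : r (k + 1) - 1 + 1 = r (k + 1) := by omega
      rw [heq] at h2
      have h3 := hrq k hk
      omega
    calc ∑ i ∈ Finset.Ico (r k) (r (k + 1)), |auxT S (auxM r p hex) ρ ω i|
        ≤ ∑ i ∈ Finset.Ico (r k) (r (k + 1)),
            (((ω i).toNat * S i : ℕ) : ℝ) * (1 / ((q k : ℝ) * q (k + 1))) := by
          apply Finset.sum_le_sum
          intro i hi
          simp only [Finset.mem_Ico] at hi
          exact hterm ω k hk i hi.1 hi.2
      _ = ((∑ i ∈ Finset.Ico (r k) (r (k + 1)), (ω i).toNat * S i : ℕ) : ℝ)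
            * (1 / ((q k : ℝ) * q (k + 1))) := by
          rw [← Finset.sum_mul]; push_cast; ring
      _ ≤ (q (k + 1) : ℝ) * (1 / ((q k : ℝ) * q (k + 1))) := by
          apply mul_le_mul_of_nonneg_right (by exact_mod_cast hnat) (by positivity)
      _ = 1 / (q k : ℝ) := by
          rw [mul_one_div, div_eq_div_iff (mul_pos (hqR k) (hqR (k+1))).ne' (hqR k).ne']
          ring
  -- ## geometric bound on 1/q
  have hsqrt1 : (1 : ℝ) < Real.sqrt 2 := by
    rw [show (1:ℝ) = Real.sqrt 1 by simp]
    exact Real.sqrt_lt_sqrt (by norm_num) (by norm_num)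
  have hsqrt0 : (0 : ℝ) < Real.sqrt 2 := by linarith
  have hgrow : ∀ n, Real.sqrt 2 ^ n ≤ 2 * q n := by
    have H : ∀ n, Real.sqrt 2 ^ n ≤ 2 * q n ∧ Real.sqrt 2 ^ (n + 1) ≤ 2 * q (n + 1) := by
      intro n
      induction n with
      | zero =>
        constructor
        · simp [hq0]
        · have h1 : (1 : ℝ) ≤ q 1 := by exact_mod_cast hqpos 1
          have h2 : Real.sqrt 2 ≤ 2 := by
            nlinarith [Real.sq_sqrt (by norm_num : (0:ℝ) ≤ 2)]
          calc Real.sqrt 2 ^ 1 = Real.sqrt 2 := pow_one _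
            _ ≤ 2 := h2
            _ ≤ 2 * q 1 := by linarith
      | succ n ih =>
        refine ⟨ih.2, ?_⟩
        have hq2' : (q n : ℝ) + q (n + 1) ≤ q (n + 2) := by exact_mod_cast hq2 n
        have hsq : Real.sqrt 2 ^ 2 = 2 := Real.sq_sqrt (by norm_num)
        have hpow : Real.sqrt 2 ^ (n + 2) = 2 * Real.sqrt 2 ^ n := by
          rw [pow_add, hsq]; ring
        have hpn : (0:ℝ) < Real.sqrt 2 ^ n := pow_pos hsqrt0 n
        have h3 : Real.sqrt 2 ^ (n + 2) ≤ Real.sqrt 2 ^ (n + 1) + Real.sqrt 2 ^ n := by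
          rw [hpow, pow_succ]
          nlinarith
        calc Real.sqrt 2 ^ (n + 2) ≤ Real.sqrt 2 ^ (n + 1) + Real.sqrt 2 ^ n := h3
          _ ≤ 2 * q (n + 1) + 2 * q n := by linarith [ih.1, ih.2]
          _ ≤ 2 * q (n + 2) := by linarith
    exact fun n => (H n).1
  set x : ℝ := (Real.sqrt 2)⁻¹ with hxdef
  have hx0 : 0 < x := by positivity
  have hx1 : x < 1 := by
    rw [hxdef, inv_lt_one_iff₀]; right; exact hsqrt1
  have hinvq : ∀ k, (1 : ℝ) / q k ≤ 2 * x ^ k := by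
    intro k
    have h1 : (0:ℝ) < Real.sqrt 2 ^ k := pow_pos hsqrt0 k
    calc (1 : ℝ) / q k ≤ 2 / Real.sqrt 2 ^ k := by
          rw [div_le_div_iff₀ (hqR k) h1]
          nlinarith [hgrow k]
      _ = 2 * x ^ k := by rw [hxdef, div_eq_mul_inv, inv_pow]
  set E : ℕ → ℝ := fun K => 2 * (1 - x)⁻¹ * x ^ K with hEdef
  have hE0 : Tendsto E atTop (nhds 0) := by
    rw [hEdef]
    have := tendsto_pow_atTop_nhds_zero_of_lt_one hx0.le hx1
    simpa using this.const_mul (2 * (1 - x)⁻¹)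
  have hgeom : ∀ K L : ℕ, ∑ k ∈ Finset.Ico K L, (1 / (q k : ℝ)) ≤ E K := by
    intro K L
    have h1 : ∑ k ∈ Finset.Ico K L, (1 / (q k : ℝ)) ≤ ∑ k ∈ Finset.Ico K L, 2 * x ^ k :=
      Finset.sum_le_sum fun k _ => hinvq k
    have h2 : ∑ k ∈ Finset.Ico K L, (2 : ℝ) * x ^ k ≤ E K := by
      rw [Finset.sum_Ico_eq_sum_range]
      have h3 : ∀ i, (2:ℝ) * x ^ (K + i) = (2 * x ^ K) * x ^ i := by
        intro i; rw [pow_add]; ring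
      rw [Finset.sum_congr rfl fun i _ => h3 i, ← Finset.mul_sum]
      have h4 : ∑ i ∈ Finset.range (L - K), x ^ i ≤ (1 - x)⁻¹ := by
        have h5 := Summable.sum_le_tsum (Finset.range (L - K))
          (fun i _ => by positivity) (summable_geometric_of_lt_one hx0.le hx1)
        rw [tsum_geometric_of_lt_one hx0.le hx1] at h5
        exact h5
      calc (2 * x ^ K) * ∑ i ∈ Finset.range (L - K), x ^ i
          ≤ (2 * x ^ K) * (1 - x)⁻¹ := by
            apply mul_le_mul_of_nonneg_left h4 (by positivity)
        _ = E K := by rw [hEdef]; ring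
    linarith
  -- ## main segment estimate
  have hest : ∀ ω : ℕ → Bool,
      (∀ j, ∑ i ∈ Finset.range (j + 1), (ω i).toNat * S i < S (j + 1)) →
      ∀ K, 1 ≤ K → ∀ N M, r K ≤ N →
        ∑ i ∈ Finset.Ico N M, |auxT S (auxM r p hex) ρ ω i| ≤ E K := by
    intro ω hω K hK N M hN
    set L := max K (M + 1) with hLdef
    have hKL : K ≤ L := le_max_left _ _
    have hML : M ≤ r L := by
      rcases le_total (M + 1) K with h | h
      · have h1 : L = K := by rw [hLdef]; omega
        rw [h1]
        have h2 := hrge (K - 1)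
        have h3 : K - 1 + 1 = K := by omega
        rw [h3] at h2
        omega
      · have h1 : L = M + 1 := by rw [hLdef]; omega
        rw [h1]
        exact hrge M
    have hseg : ∀ L', K ≤ L' →
        ∑ i ∈ Finset.Ico (r K) (r L'), |auxT S (auxM r p hex) ρ ω i|
          ≤ ∑ k ∈ Finset.Ico K L', 1 / (q k : ℝ) := by
      intro L' hL'
      induction L', hL' using Nat.le_induction with
      | base => simp
      | succ L' hKL' ih =>
        have h1 : r K ≤ r L' := hrmono K L' hK hKL'
        have h2 : r L' ≤ r (L' + 1) := hrstep L' (le_trans hK hKL')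
        rw [← Finset.sum_Ico_consecutive _ h1 h2,
          Finset.sum_Ico_succ_top hKL']
        exact add_le_add ih (hblock ω hω L' (le_trans hK hKL'))
    have hsub : Finset.Ico N M ⊆ Finset.Ico (r K) (r L) := by
      intro i hi
      simp only [Finset.mem_Ico] at hi ⊢
      omega
    calc ∑ i ∈ Finset.Ico N M, |auxT S (auxM r p hex) ρ ω i|
        ≤ ∑ i ∈ Finset.Ico (r K) (r L), |auxT S (auxM r p hex) ρ ω i| :=
          Finset.sum_le_sum_of_subset_of_nonneg hsub (fun i _ _ => abs_nonneg _)
      _ ≤ ∑ k ∈ Finset.Ico K L, 1 / (q k : ℝ) := hseg L hKL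
      _ ≤ E K := hgeom K L
  -- ## convergence of the partial sums G
  have hdiff : ∀ ω : ℕ → Bool, ∀ N M : ℕ, N ≤ M →
      auxG S (auxM r p hex) ρ ω M - auxG S (auxM r p hex) ρ ω N
        = ∑ i ∈ Finset.Ico (N + 1) (M + 1), auxT S (auxM r p hex) ρ ω i := by
    intro ω N M hNM
    have h := Finset.sum_Ico_consecutive (auxT S (auxM r p hex) ρ ω)
      (Nat.zero_le (N + 1)) (by omega : N + 1 ≤ M + 1)
    simp only [auxG, Finset.range_eq_Ico]
    linarith [h]
  have hEK : ∀ ε : ℝ, 0 < ε → ∃ K, 1 ≤ K ∧ E K < ε := by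
    intro ε hε
    have h1 : ∀ᶠ K in atTop, E K < ε := hE0.eventually (gt_mem_nhds hε)
    have h2 : ∀ᶠ K in (atTop : Filter ℕ), 1 ≤ K := eventually_ge_atTop 1
    rcases (h1.and h2).exists with ⟨K, hK1, hK2⟩
    exact ⟨K, hK2, hK1⟩
  have hconv : ∀ ω : {ω : ℕ → Bool //
      ∀ j, ∑ i ∈ Finset.range (j + 1), (ω i).toNat * S i < S (j + 1)},
      ∃ l : ℝ, Tendsto (fun N => auxG S (auxM r p hex) ρ ω.val N) atTop (nhds l) := by
    intro ω
    apply cauchySeq_tendsto_of_complete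
    rw [Metric.cauchySeq_iff']
    intro ε hε
    rcases hEK ε hε with ⟨K, hK1, hKε⟩
    refine ⟨r K, fun n hn => ?_⟩
    rw [Real.dist_eq, hdiff ω.val (r K) n hn]
    calc |∑ i ∈ Finset.Ico (r K + 1) (n + 1), auxT S (auxM r p hex) ρ ω.val i|
        ≤ ∑ i ∈ Finset.Ico (r K + 1) (n + 1), |auxT S (auxM r p hex) ρ ω.val i| :=
          Finset.abs_sum_le_sum_abs _ _
      _ ≤ E K := hest ω.val ω.property K hK1 (r K + 1) (n + 1) (by omega)
      _ < ε := hKε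
  choose F hF using hconv
  -- uniform closeness of G to F
  have hFbd : ∀ ω, ∀ K, 1 ≤ K → ∀ N, r K ≤ N →
      |F ω - auxG S (auxM r p hex) ρ ω.val N| ≤ E K := by
    intro ω K hK N hN
    have h1 : ∀ M, N ≤ M →
        |auxG S (auxM r p hex) ρ ω.val M - auxG S (auxM r p hex) ρ ω.val N| ≤ E K := by
      intro M hM
      rw [hdiff ω.val N M hM]
      calc |∑ i ∈ Finset.Ico (N + 1) (M + 1), auxT S (auxM r p hex) ρ ω.val i|
          ≤ ∑ i ∈ Finset.Ico (N + 1) (M + 1), |auxT S (auxM r p hex) ρ ω.val i| :=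
            Finset.abs_sum_le_sum_abs _ _
        _ ≤ E K := hest ω.val ω.property K hK (N + 1) (M + 1) (by omega)
    have h2 : Tendsto (fun M => |auxG S (auxM r p hex) ρ ω.val M
        - auxG S (auxM r p hex) ρ ω.val N|) atTop
        (nhds |F ω - auxG S (auxM r p hex) ρ ω.val N|) :=
      ((hF ω).sub tendsto_const_nhds).abs
    apply le_of_tendsto h2
    filter_upwards [eventually_ge_atTop N] with M hM using h1 M hM
  -- continuity of F
  have hGcont : ∀ N, Continuous (fun ω : {ω : ℕ → Bool //
      ∀ j, ∑ i ∈ Finset.range (j + 1), (ω i).toNat * S i < S (j + 1)} =>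
        auxG S (auxM r p hex) ρ ω.val N) := by
    intro N
    simp only [auxG, auxT]
    apply continuous_finset_sum
    intro i _
    have h1 : Continuous (fun ω : {ω : ℕ → Bool //
        ∀ j, ∑ i ∈ Finset.range (j + 1), (ω i).toNat * S i < S (j + 1)} => ω.val i) :=
      (continuous_apply i).comp continuous_subtype_val
    have h2 : Continuous (fun b : Bool => ((b.toNat : ℝ))) := continuous_of_discreteTopology
    exact (h2.comp h1).mul continuous_const
  have htu : TendstoUniformly (fun N ω => auxG S (auxM r p hex) ρ ω.val N) F atTop := by
    rw [Metric.tendstoUniformly_iff]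
    intro ε hε
    rcases hEK (ε / 2) (by linarith) with ⟨K, hK1, hKε⟩
    filter_upwards [eventually_ge_atTop (r K)] with N hN ω
    rw [Real.dist_eq]
    calc |F ω - auxG S (auxM r p hex) ρ ω.val N| ≤ E K := hFbd ω K hK1 N hN
      _ < ε := by linarith
  have hFcont : Continuous F := htu.continuous (Eventually.of_forall hGcont).frequently
  -- ## assemble
  refine ⟨fun ω => ((F ω : ℝ) : AddCircle (1 : ℝ)), ?_, ?_⟩
  · exact (AddCircle.continuous_mk' (1 : ℝ)).comp hFcont
  · intro ω
    have hcoeint : ∀ (y : ℝ) (z : ℤ),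
        ((y + (z : ℝ) : ℝ) : AddCircle (1 : ℝ)) = (y : AddCircle (1 : ℝ)) := by
      intro y z
      rw [AddCircle.coe_add]
      have h1 : (((z : ℝ)) : AddCircle (1 : ℝ)) = 0 := by
        rw [AddCircle.coe_eq_zero_iff]
        exact ⟨z, by simp⟩
      rw [h1, add_zero]
    have heq : ∀ N, ((↑(∑ j ∈ Finset.range (N + 1),
        ((ω.val j).toNat : ℝ) * (S j : ℝ) * ρ)) : AddCircle (1 : ℝ))
        = ((auxG S (auxM r p hex) ρ ω.val N : ℝ) : AddCircle (1 : ℝ)) := by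
      intro N
      have h1 : ∑ j ∈ Finset.range (N + 1), ((ω.val j).toNat : ℝ) * (S j : ℝ) * ρ
          = auxG S (auxM r p hex) ρ ω.val N + (((∑ j ∈ Finset.range (N + 1),
              ((ω.val j).toNat : ℤ) * auxM r p hex j : ℤ) : ℤ) : ℝ) := by
        simp only [auxG, auxT]
        push_cast
        rw [← Finset.sum_add_distrib]
        apply Finset.sum_congr rfl
        intro j _
        ring
      rw [h1, hcoeint]
    have h3 : Tendsto (fun N => ((auxG S (auxM r p hex) ρ ω.val N : ℝ) : AddCircle (1 : ℝ)))
        atTop (nhds ((F ω : ℝ) : AddCircle (1 : ℝ))) :=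
      ((AddCircle.continuous_mk' (1 : ℝ)).tendsto (F ω)).comp (hF ω)
    exact Tendsto.congr (fun N => (heq N).symm) h3
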